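/- Let n ≥ 2 and let {A(t)}_{t≥0} be a sequence of row-stochastic n×n matrices such that each transpose A'(t) is of out-degree form, and suppose {A(t)} is strongly aperiodic and has the directed infinite flow property. If the associated sequence {ℓ_q} satisfies Σ_{q=1}^∞ 1/n^{ℓ_q} = ∞, then {A(t)} is ergodic: for every s ≥ 0 there exists a stochastic vector v(s) ∈ ℝⁿ such that lim_{t→∞} [A(t:s)]_{ij} = v_j(s) for all i, j ∈ [n]. -/

import Mathlib

open Finset MeasureTheory

/-- `A_{S S̄} = ∑_{i ∈ S, j ∉ S} A i j`. -/
def flowSum {n : ℕ} (A : Matrix (Fin n) (Fin n) ℝ) (S : Finset (Fin n)) : ℝ :=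
  ∑ i ∈ S, ∑ j ∈ Sᶜ, A i j

/-- `S` is a nontrivial subset of `[n]`. -/
def NontrivialSubset {n : ℕ} (S : Finset (Fin n)) : Prop :=
  S.Nonempty ∧ S ≠ Finset.univ

/-- Directed infinite flow property: for every nontrivial `S`, `∑_t A_{S S̄}(t) = ∞`. -/
def DirectedInfiniteFlow {n : ℕ} (A : ℕ → Matrix (Fin n) (Fin n) ℝ) : Prop :=
  ∀ S : Finset (Fin n), NontrivialSubset S →
    Filter.Tendsto (fun T => ∑ t ∈ Finset.range T, flowSum (A t) S)
      Filter.atTop Filter.atTop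

/-- The backward product `A(t:s) = A(t) A(t-1) ⋯ A(s)`. -/
def matProd {n : ℕ} (A : ℕ → Matrix (Fin n) (Fin n) ℝ) (t s : ℕ) :
    Matrix (Fin n) (Fin n) ℝ :=
  (((List.range (t + 1 - s)).map fun k => A (t - k))).prod

/-- Row-stochastic nonnegative matrix. -/
def RowStochastic {n : ℕ} (A : Matrix (Fin n) (Fin n) ℝ) : Prop :=
  (∀ i j, 0 ≤ A i j) ∧ ∀ i, ∑ j, A i j = 1

/-- Column-stochastic nonnegative matrix. -/
def ColStochastic {n : ℕ} (A : Matrix (Fin n) (Fin n) ℝ) : Prop :=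
  (∀ i j, 0 ≤ A i j) ∧ ∀ j, ∑ i, A i j = 1

/-- `W` is the degree-normalized adjacency matrix of a digraph with all self-loops:
`W i j = 1 / (out-degree of j)` if there is an edge from `j` to `i`, else `0`. -/
def OutDegreeForm {n : ℕ} (W : Matrix (Fin n) (Fin n) ℝ) : Prop :=
  ∃ N : Fin n → Finset (Fin n), (∀ j, j ∈ N j) ∧
    ∀ i j, W i j = if i ∈ N j then (1 : ℝ) / (N j).card else 0

/-- Strong aperiodicity of a sequence of matrices. -/
def StronglyAperiodic {n : ℕ} (A : ℕ → Matrix (Fin n) (Fin n) ℝ) : Prop :=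
  ∃ γ : ℝ, 0 < γ ∧ ∀ t i, γ ≤ A t i i

/-- The times `k_q`: `k_0 = 0` and `k_q` is the least `t' > k_{q-1}` with
nonzero flow `∑_{t=k_{q-1}}^{t'-1} A_{S S̄}(t) > 0` across every nontrivial cut. -/
noncomputable def kSeq {n : ℕ} (A : ℕ → Matrix (Fin n) (Fin n) ℝ) : ℕ → ℕ
  | 0 => 0
  | q + 1 => sInf {t' : ℕ | kSeq A q < t' ∧ ∀ S : Finset (Fin n), NontrivialSubset S →
      0 < ∑ t ∈ Finset.Ico (kSeq A q) t', flowSum (A t) S}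

/-- `ℓ_q = k_{qn} - k_{(q-1)n}`. -/
noncomputable def ellSeq {n : ℕ} (A : ℕ → Matrix (Fin n) (Fin n) ℝ) (q : ℕ) : ℕ :=
  kSeq A (q * n) - kSeq A ((q - 1) * n)

/-- The index set `Q_{t,s} = {q ≥ 1 : s ≤ k_{(q-1)n}, k_{qn} ≤ t}` (as a `Finset`). -/
noncomputable def QSet {n : ℕ} (A : ℕ → Matrix (Fin n) (Fin n) ℝ) (t s : ℕ) :
    Finset ℕ :=
  (Finset.Icc 1 t).filter fun q => s ≤ kSeq A ((q - 1) * n) ∧ kSeq A (q * n) ≤ t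

/-- `Λ_{t,s} = ∏_{q ∈ Q_{t,s}} (1 - 1/n^{ℓ_q})`. -/
noncomputable def Lam {n : ℕ} (A : ℕ → Matrix (Fin n) (Fin n) ℝ) (t s : ℕ) : ℝ :=
  ∏ q ∈ QSet A t s, (1 - 1 / (n : ℝ) ^ (ellSeq A q))

/-- Push-sum iterates: `u(0) = u0`, `u(t+1) = W(t) u(t)`. -/
def pushIter {n : ℕ} (W : ℕ → Matrix (Fin n) (Fin n) ℝ) (u0 : Fin n → ℝ) : ℕ → Fin n → ℝ
  | 0 => u0
  | t + 1 => (W t).mulVec (pushIter W u0 t)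

/-- A nonnegative matrix is irreducible if the digraph with an edge from `j` to `i`
whenever `A i j > 0` is strongly connected. -/
def IrreducibleMat {n : ℕ} (A : Matrix (Fin n) (Fin n) ℝ) : Prop :=
  ∀ i j : Fin n, Relation.ReflTransGen (fun a b => 0 < A b a) i j

section Aux
variable {n : ℕ} (A : ℕ → Matrix (Fin n) (Fin n) ℝ) (s : ℕ)

/-- Forward product from time `s`: product of `A τ` for `s ≤ τ < t`. -/
def prodFrom : ℕ → Matrix (Fin n) (Fin n) ℝ
  | 0 => 1
  | t + 1 => if s ≤ t then A t * prodFrom t else 1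

lemma prodFrom_of_le {t : ℕ} (h : t ≤ s) : prodFrom A s t = 1 := by
  cases t with
  | zero => rfl
  | succ t => rw [prodFrom, if_neg (by omega)]

lemma prodFrom_succ {t : ℕ} (h : s ≤ t) :
    prodFrom A s (t + 1) = A t * prodFrom A s t := by
  rw [prodFrom, if_pos h]

lemma matProd_succ {t : ℕ} (h : s ≤ t + 1) :
    matProd A (t + 1) s = A (t + 1) * matProd A t s := by
  unfold matProd
  have h2 : t + 1 + 1 - s = (t + 1 - s) + 1 := by omega
  rw [h2, List.range_succ_eq_map, List.map_cons, List.map_map, List.prod_cons]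
  have h3 : ((fun k => A (t + 1 - k)) ∘ Nat.succ) = fun k => A (t - k) := by
    funext k; simp [Nat.succ_sub_succ]
  rw [h3]
  norm_num

lemma matProd_eq_prodFrom {t : ℕ} (h : s ≤ t + 1) :
    matProd A t s = prodFrom A s (t + 1) := by
  induction t with
  | zero =>
    interval_cases s
    · show matProd A 0 0 = _
      rw [prodFrom_succ A 0 le_rfl, prodFrom_of_le A 0 le_rfl]
      unfold matProd
      simp [List.range_succ]
    · show matProd A 0 1 = _
      rw [prodFrom_of_le A 1 le_rfl]
      unfold matProd
      simp
  | succ t ih =>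
    rcases Nat.lt_or_ge t (s - 1) with h1 | h1
    · have hs : s = t + 2 := by omega
      subst hs
      rw [prodFrom_of_le A (t+2) le_rfl]
      unfold matProd
      simp
    · have hst : s ≤ t + 1 := by omega
      rw [matProd_succ A s hst, ih hst,
        prodFrom_succ A s (show s ≤ t + 1 from hst)]

end Aux
section Aux2
variable {n : ℕ} {A : ℕ → Matrix (Fin n) (Fin n) ℝ}

lemma rowStochastic_one : RowStochastic (1 : Matrix (Fin n) (Fin n) ℝ) := by
  constructor
  · intro i j
    by_cases h : i = j <;> simp [Matrix.one_apply, h]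
  · intro i
    simp [Matrix.one_apply]

lemma rowStochastic_mul {P Q : Matrix (Fin n) (Fin n) ℝ}
    (hP : RowStochastic P) (hQ : RowStochastic Q) : RowStochastic (P * Q) := by
  constructor
  · intro i j
    rw [Matrix.mul_apply]
    exact Finset.sum_nonneg fun k _ => mul_nonneg (hP.1 i k) (hQ.1 k j)
  · intro i
    simp only [Matrix.mul_apply]
    rw [Finset.sum_comm]
    have : ∀ k ∈ Finset.univ, ∑ j, P i k * Q k j = P i k := by
      intro k _
      rw [← Finset.mul_sum, hQ.2 k, mul_one]
    rw [Finset.sum_congr rfl this, hP.2 i]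

lemma rowStochastic_prodFrom (hRS : ∀ t, RowStochastic (A t)) (s t : ℕ) :
    RowStochastic (prodFrom A s t) := by
  induction t with
  | zero => exact rowStochastic_one
  | succ t ih =>
    rw [prodFrom]
    split
    · exact rowStochastic_mul (hRS t) ih
    · exact rowStochastic_one

lemma entry_le_one {P : Matrix (Fin n) (Fin n) ℝ} (hP : RowStochastic P) (i j : Fin n) :
    P i j ≤ 1 := by
  rw [← hP.2 i]
  exact Finset.single_le_sum (fun k _ => hP.1 i k) (Finset.mem_univ j)

/-- Entry structure from the out-degree form of the transpose. -/
lemma entry_struct (hOD : ∀ t, OutDegreeForm (A t).transpose) :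
    (∀ t i, 0 < A t i i) ∧ (∀ t i j, 0 < A t i j → 1 / (n : ℝ) ≤ A t i j) := by
  have key : ∀ t i j, (0 < A t i j → 1 / (n : ℝ) ≤ A t i j) ∧ 0 < A t i i := by
    intro t i j
    obtain ⟨N, hself, hform⟩ := hOD t
    have hij : A t i j = if j ∈ N i then (1 : ℝ) / (N i).card else 0 := by
      simpa [Matrix.transpose_apply] using hform j i
    have hii : A t i i = (1 : ℝ) / (N i).card := by
      have := hform i i
      rw [Matrix.transpose_apply, if_pos (hself i)] at this
      exact this
    have hcard : 1 ≤ (N i).card := Finset.card_pos.mpr ⟨i, hself i⟩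
    have hcardn : (N i).card ≤ n := by
      simpa using Finset.card_le_card (Finset.subset_univ (N i))
    have hpos : (0 : ℝ) < 1 / (N i).card := by positivity
    constructor
    · intro h
      rw [hij] at h ⊢
      split at h
      · rw [if_pos (by assumption)]
        apply one_div_le_one_div_of_le (by positivity)
        exact_mod_cast hcardn
      · exact absurd h (lt_irrefl 0)
    · rw [hii]; exact hpos

  exact ⟨fun t i => (key t i i).2, fun t i j => (key t i j).1⟩

end Aux2
section Aux3
variable {n : ℕ} {A : ℕ → Matrix (Fin n) (Fin n) ℝ}

lemma prodFrom_nonneg (hRS : ∀ t, RowStochastic (A t)) (s t : ℕ) (i j : Fin n) :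
    0 ≤ prodFrom A s t i j :=
  (rowStochastic_prodFrom hRS s t).1 i j

lemma prodFrom_step_pos (hRS : ∀ t, RowStochastic (A t)) {s t : ℕ} (hst : s ≤ t)
    {i k j : Fin n} (hA : 0 < A t i k) (hP : 0 < prodFrom A s t k j) :
    0 < prodFrom A s (t + 1) i j := by
  rw [prodFrom_succ A s hst, Matrix.mul_apply]
  have h1 : 0 < A t i k * prodFrom A s t k j := mul_pos hA hP
  calc (0:ℝ) < A t i k * prodFrom A s t k j := h1
    _ ≤ ∑ k', A t i k' * prodFrom A s t k' j :=
      Finset.single_le_sum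
        (fun k' _ => mul_nonneg ((hRS t).1 i k') (prodFrom_nonneg hRS s t k' j))
        (Finset.mem_univ k)

lemma prodFrom_diag_pos (hRS : ∀ t, RowStochastic (A t))
    (hd : ∀ t i, 0 < A t i i) (s : ℕ) : ∀ t j, 0 < prodFrom A s t j j := by
  intro t j
  induction t with
  | zero => simp [prodFrom, Matrix.one_apply]
  | succ t ih =>
    by_cases h : s ≤ t
    · exact prodFrom_step_pos hRS h (hd t j) ih
    · rw [prodFrom_of_le A s (by omega)]
      simp [Matrix.one_apply]

lemma prodFrom_supp_mono (hRS : ∀ t, RowStochastic (A t))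
    (hd : ∀ t i, 0 < A t i i) {s t t' : ℕ} (h : t ≤ t') {i j : Fin n}
    (hpos : 0 < prodFrom A s t i j) : 0 < prodFrom A s t' i j := by
  induction t', h using Nat.le_induction with
  | base => exact hpos
  | succ u hu ih =>
    by_cases hsu : s ≤ u
    · exact prodFrom_step_pos hRS hsu (hd u i) ih
    · rw [prodFrom_of_le A s (by omega)] at ih ⊢
      exact ih

lemma prodFrom_pos_lb (hRS : ∀ t, RowStochastic (A t))
    (hlb : ∀ t i j, 0 < A t i j → 1 / (n : ℝ) ≤ A t i j) {s t : ℕ} (hst : s ≤ t) :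
    ∀ i j, 0 < prodFrom A s t i j → (1 / (n : ℝ)) ^ (t - s) ≤ prodFrom A s t i j := by
  induction t, hst using Nat.le_induction with
  | base =>
    intro i j h
    rw [prodFrom_of_le A s le_rfl] at h ⊢
    rw [Nat.sub_self, pow_zero]
    by_cases hij : i = j
    · simp [Matrix.one_apply, hij]
    · simp [Matrix.one_apply, hij] at h
  | succ t ht ih =>
    intro i j h
    rw [prodFrom_succ A s ht, Matrix.mul_apply] at h ⊢
    have hex : ∃ k, 0 < A t i k * prodFrom A s t k j := by
      by_contra hc
      push_neg at hc
      have : ∑ k, A t i k * prodFrom A s t k j ≤ 0 :=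
        Finset.sum_nonpos fun k _ => hc k
      linarith
    obtain ⟨k, hk⟩ := hex
    have hAk : 0 < A t i k := by
      rcases mul_pos_iff.mp hk with ⟨h1, _⟩ | ⟨h1, h2⟩
      · exact h1
      · exact absurd h2 (not_lt.mpr (prodFrom_nonneg hRS s t k j))
    have hPk : 0 < prodFrom A s t k j := by
      rcases mul_pos_iff.mp hk with ⟨_, h2⟩ | ⟨h1, _⟩
      · exact h2
      · exact absurd h1 (not_lt.mpr ((hRS t).1 i k))
    have hn0 : (0:ℝ) ≤ 1 / (n:ℝ) := by positivity
    have hstep : (1 / (n : ℝ)) ^ (t + 1 - s) ≤ A t i k * prodFrom A s t k j := by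
      have he : t + 1 - s = (t - s) + 1 := by omega
      rw [he, pow_succ]
      rw [mul_comm ((1 / (n : ℝ)) ^ (t - s)) _]
      exact mul_le_mul (hlb t i k hAk) (ih k j hPk) (by positivity) (le_of_lt hAk)
    calc (1 / (n : ℝ)) ^ (t + 1 - s) ≤ A t i k * prodFrom A s t k j := hstep
      _ ≤ ∑ k', A t i k' * prodFrom A s t k' j :=
        Finset.single_le_sum
          (fun k' _ => mul_nonneg ((hRS t).1 i k') (prodFrom_nonneg hRS s t k' j))
          (Finset.mem_univ k)

lemma flowSum_nonneg (hRS : ∀ t, RowStochastic (A t)) (t : ℕ) (S : Finset (Fin n)) :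
    0 ≤ flowSum (A t) S :=
  Finset.sum_nonneg fun i _ => Finset.sum_nonneg fun j _ => (hRS t).1 i j

lemma exists_flow_time (hRS : ∀ t, RowStochastic (A t)) (hflow : DirectedInfiniteFlow A)
    (k : ℕ) : ∃ T, k < T ∧ ∀ S, NontrivialSubset S →
      0 < ∑ t ∈ Finset.Ico k T, flowSum (A t) S := by
  classical
  have hev : ∀ᶠ T in Filter.atTop, ∀ S : {S : Finset (Fin n) // NontrivialSubset S},
      ∑ t ∈ Finset.range k, flowSum (A t) S.1 < ∑ t ∈ Finset.range T, flowSum (A t) S.1 := by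
    rw [Filter.eventually_all]
    exact fun S => (hflow S.1 S.2).eventually_gt_atTop _
  obtain ⟨T, hkT, hT⟩ := ((Filter.eventually_gt_atTop k).and hev).exists
  refine ⟨T, hkT, fun S hS => ?_⟩
  have := hT ⟨S, hS⟩
  rw [Finset.sum_Ico_eq_sub _ (le_of_lt hkT)]
  linarith

lemma kSeq_spec (hRS : ∀ t, RowStochastic (A t)) (hflow : DirectedInfiniteFlow A)
    (q : ℕ) : kSeq A q < kSeq A (q + 1) ∧ ∀ S, NontrivialSubset S →
      0 < ∑ t ∈ Finset.Ico (kSeq A q) (kSeq A (q + 1)), flowSum (A t) S := by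
  obtain ⟨T, hT⟩ := exists_flow_time hRS hflow (kSeq A q)
  have hmem := Nat.sInf_mem (⟨T, hT⟩ : Set.Nonempty {t' : ℕ | kSeq A q < t' ∧
      ∀ S : Finset (Fin n), NontrivialSubset S →
        0 < ∑ t ∈ Finset.Ico (kSeq A q) t', flowSum (A t) S})
  rw [show kSeq A (q + 1) = sInf {t' : ℕ | kSeq A q < t' ∧
      ∀ S : Finset (Fin n), NontrivialSubset S →
        0 < ∑ t ∈ Finset.Ico (kSeq A q) t', flowSum (A t) S} from rfl]
  exact hmem

lemma kSeq_strictMono (hRS : ∀ t, RowStochastic (A t)) (hflow : DirectedInfiniteFlow A) :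
    StrictMono (kSeq A) :=
  strictMono_nat_of_lt_succ fun q => (kSeq_spec hRS hflow q).1

lemma kSeq_ge (hRS : ∀ t, RowStochastic (A t)) (hflow : DirectedInfiniteFlow A) (q : ℕ) :
    q ≤ kSeq A q :=
  (kSeq_strictMono hRS hflow).le_apply

end Aux3
section Aux4
open scoped Classical
variable {n : ℕ} {A : ℕ → Matrix (Fin n) (Fin n) ℝ}

lemma supp_card_grow (hRS : ∀ t, RowStochastic (A t)) (hd : ∀ t i, 0 < A t i i)
    {s a b : ℕ} {j : Fin n} (hsa : s ≤ a) (hab : a ≤ b)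
    (hflowab : ∀ S : Finset (Fin n), NontrivialSubset S →
      0 < ∑ t ∈ Finset.Ico a b, flowSum (A t) S)
    (hne : (Finset.univ.filter fun i => 0 < prodFrom A s a i j) ≠ Finset.univ) :
    (Finset.univ.filter fun i => 0 < prodFrom A s a i j).card + 1 ≤
    (Finset.univ.filter fun i => 0 < prodFrom A s b i j).card := by
  set Sa := Finset.univ.filter fun i => 0 < prodFrom A s a i j with hSa
  set Sb := Finset.univ.filter fun i => 0 < prodFrom A s b i j with hSb
  have hsub : Sa ⊆ Sb := by
    intro i hi
    rw [hSa, Finset.mem_filter] at hi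
    rw [hSb, Finset.mem_filter]
    exact ⟨Finset.mem_univ i, prodFrom_supp_mono hRS hd hab hi.2⟩
  have hjSa : j ∈ Sa := by
    rw [hSa, Finset.mem_filter]
    exact ⟨Finset.mem_univ j, prodFrom_diag_pos hRS hd s a j⟩
  have hSc : NontrivialSubset Saᶜ := by
    constructor
    · have : ∃ x, x ∉ Sa := by
        by_contra hcon
        push_neg at hcon
        exact hne (Finset.eq_univ_iff_forall.mpr hcon)
      obtain ⟨x, hx⟩ := this
      exact ⟨x, Finset.mem_compl.mpr hx⟩
    · intro h
      have : Sa = ∅ := by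
        have := congrArg (·ᶜ) h
        simpa using this
      rw [this] at hjSa
      exact absurd hjSa (Finset.notMem_empty j)
  have hpos := hflowab Saᶜ hSc
  -- extract a time with positive flow
  have hex1 : ∃ t ∈ Finset.Ico a b, 0 < flowSum (A t) Saᶜ := by
    by_contra hc
    push_neg at hc
    have : ∑ t ∈ Finset.Ico a b, flowSum (A t) Saᶜ ≤ 0 :=
      Finset.sum_nonpos fun t ht => hc t ht
    linarith
  obtain ⟨t, htmem, htpos⟩ := hex1
  rw [Finset.mem_Ico] at htmem
  unfold flowSum at htpos
  have hex2 : ∃ i ∈ Saᶜ, 0 < ∑ k ∈ Saᶜᶜ, A t i k := by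
    by_contra hc
    push_neg at hc
    have : ∑ i ∈ Saᶜ, ∑ k ∈ Saᶜᶜ, A t i k ≤ 0 :=
      Finset.sum_nonpos fun i hi => hc i hi
    linarith
  obtain ⟨i, hiSc, hipos⟩ := hex2
  have hex3 : ∃ k ∈ Saᶜᶜ, 0 < A t i k := by
    by_contra hc
    push_neg at hc
    have : ∑ k ∈ Saᶜᶜ, A t i k ≤ 0 := Finset.sum_nonpos fun k hk => hc k hk
    linarith
  obtain ⟨k, hkmem, hkpos⟩ := hex3
  rw [compl_compl] at hkmem
  rw [hSa, Finset.mem_filter] at hkmem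
  have hkt : 0 < prodFrom A s t k j := prodFrom_supp_mono hRS hd htmem.1 hkmem.2
  have hit1 : 0 < prodFrom A s (t + 1) i j :=
    prodFrom_step_pos hRS (le_trans hsa htmem.1) hkpos hkt
  have hib : 0 < prodFrom A s b i j :=
    prodFrom_supp_mono hRS hd (by omega) hit1
  have hiSb : i ∈ Sb := by
    rw [hSb, Finset.mem_filter]; exact ⟨Finset.mem_univ i, hib⟩
  have hiSa : i ∉ Sa := by
    rw [Finset.mem_compl] at hiSc; exact hiSc
  have hss : Sa ⊂ Sb := ⟨hsub, fun hba => hiSa (hba hiSb)⟩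
  exact Nat.succ_le_of_lt (Finset.card_lt_card hss)

lemma window_allpos (hRS : ∀ t, RowStochastic (A t)) (hd : ∀ t i, 0 < A t i i)
    (hflow : DirectedInfiniteFlow A) (m : ℕ) (i j : Fin n) :
    0 < prodFrom A (kSeq A m) (kSeq A (m + n)) i j := by
  set a := kSeq A m with ha
  have claim : ∀ r : ℕ, min n (r + 1) ≤
      (Finset.univ.filter fun i => 0 < prodFrom A a (kSeq A (m + r)) i j).card := by
    intro r
    induction r with
    | zero =>
      have hj : j ∈ Finset.univ.filter fun i => 0 < prodFrom A a (kSeq A (m + 0)) i j := by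
        rw [Finset.mem_filter]
        exact ⟨Finset.mem_univ j, prodFrom_diag_pos hRS hd a _ j⟩
      have := Finset.card_pos.mpr ⟨j, hj⟩
      omega
    | succ r ih =>
      by_cases hfull : (Finset.univ.filter fun i => 0 < prodFrom A a (kSeq A (m + r)) i j)
          = Finset.univ
      · have hsub : (Finset.univ.filter fun i =>
            0 < prodFrom A a (kSeq A (m + r + 1)) i j) = Finset.univ := by
          apply Finset.eq_univ_iff_forall.mpr
          intro x
          have hx : x ∈ Finset.univ.filter fun i => 0 < prodFrom A a (kSeq A (m + r)) i j := by
            rw [hfull]; exact Finset.mem_univ x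
          rw [Finset.mem_filter] at hx
          rw [Finset.mem_filter]
          exact ⟨Finset.mem_univ x, prodFrom_supp_mono hRS hd
            ((kSeq_strictMono hRS hflow).monotone (by omega)) hx.2⟩
        have : (m + (r + 1)) = (m + r + 1) := by omega
        rw [this, hsub, Finset.card_univ, Fintype.card_fin]
        omega
      · have hgrow := supp_card_grow hRS hd
          (s := a) (a := kSeq A (m + r)) (b := kSeq A (m + r + 1)) (j := j)
          ((kSeq_strictMono hRS hflow).monotone (by omega))
          ((kSeq_strictMono hRS hflow).monotone (by omega))
          (fun S hS => (kSeq_spec hRS hflow (m + r)).2 S hS)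
          hfull
        have : (m + (r + 1)) = (m + r + 1) := by omega
        rw [this]
        omega
  have hfin := claim n
  have hcard : (Finset.univ.filter fun i => 0 < prodFrom A a (kSeq A (m + n)) i j).card = n := by
    have hle : (Finset.univ.filter fun i => 0 < prodFrom A a (kSeq A (m + n)) i j).card ≤ n := by
      have := Finset.card_le_card (Finset.filter_subset
        (fun i => 0 < prodFrom A a (kSeq A (m + n)) i j) Finset.univ)
      rw [Finset.card_univ, Fintype.card_fin] at this
      exact this
    omega
  have huniv : (Finset.univ.filter fun i => 0 < prodFrom A a (kSeq A (m + n)) i j)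
      = Finset.univ := by
    apply Finset.eq_univ_of_card
    rw [hcard, Fintype.card_fin]
  have hmem : i ∈ Finset.univ.filter fun i => 0 < prodFrom A a (kSeq A (m + n)) i j := by
    rw [huniv]; exact Finset.mem_univ i
  rw [Finset.mem_filter] at hmem
  exact hmem.2

lemma window_lb (hRS : ∀ t, RowStochastic (A t)) (hd : ∀ t i, 0 < A t i i)
    (hlb : ∀ t i j, 0 < A t i j → 1 / (n : ℝ) ≤ A t i j)
    (hflow : DirectedInfiniteFlow A) (m : ℕ) (i j : Fin n) :
    (1 / (n : ℝ)) ^ (kSeq A (m + n) - kSeq A m) ≤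
      prodFrom A (kSeq A m) (kSeq A (m + n)) i j :=
  prodFrom_pos_lb hRS hlb ((kSeq_strictMono hRS hflow).monotone (by omega)) i j
    (window_allpos hRS hd hflow m i j)

end Aux4
section Aux5
variable {n : ℕ} {P : Matrix (Fin n) (Fin n) ℝ}

lemma mulVec_ge_inf' (hP : RowStochastic P) (x : Fin n → ℝ)
    (hne : (Finset.univ : Finset (Fin n)).Nonempty) (i : Fin n) :
    Finset.univ.inf' hne x ≤ P.mulVec x i := by
  have : P.mulVec x i = ∑ j, P i j * x j := rfl
  rw [this]
  calc Finset.univ.inf' hne x = (∑ j, P i j) * Finset.univ.inf' hne x := by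
        rw [hP.2 i, one_mul]
    _ = ∑ j, P i j * Finset.univ.inf' hne x := by rw [Finset.sum_mul]
    _ ≤ ∑ j, P i j * x j := Finset.sum_le_sum fun j _ =>
        mul_le_mul_of_nonneg_left (Finset.inf'_le x (Finset.mem_univ j)) (hP.1 i j)

lemma mulVec_le_sup' (hP : RowStochastic P) (x : Fin n → ℝ)
    (hne : (Finset.univ : Finset (Fin n)).Nonempty) (i : Fin n) :
    P.mulVec x i ≤ Finset.univ.sup' hne x := by
  have : P.mulVec x i = ∑ j, P i j * x j := rfl
  rw [this]
  calc ∑ j, P i j * x j ≤ ∑ j, P i j * Finset.univ.sup' hne x :=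
        Finset.sum_le_sum fun j _ =>
          mul_le_mul_of_nonneg_left (Finset.le_sup' x (Finset.mem_univ j)) (hP.1 i j)
    _ = (∑ j, P i j) * Finset.univ.sup' hne x := by rw [Finset.sum_mul]
    _ = Finset.univ.sup' hne x := by rw [hP.2 i, one_mul]

lemma osc_contraction (hP : RowStochastic P) {α : ℝ} (hα : 0 ≤ α) {j0 : Fin n}
    (hcol : ∀ i, α ≤ P i j0) (x : Fin n → ℝ)
    (hne : (Finset.univ : Finset (Fin n)).Nonempty) :
    Finset.univ.sup' hne (P.mulVec x) - Finset.univ.inf' hne (P.mulVec x) ≤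
      (1 - α) * (Finset.univ.sup' hne x - Finset.univ.inf' hne x) := by
  obtain ⟨i, _, hi⟩ := Finset.exists_mem_eq_sup' hne (P.mulVec x)
  obtain ⟨k, _, hk⟩ := Finset.exists_mem_eq_inf' hne (P.mulVec x)
  set m := Finset.univ.inf' hne x with hm
  set M := Finset.univ.sup' hne x with hM
  have hMm : m ≤ M := by
    obtain ⟨i0⟩ := Finset.Nonempty.to_subtype hne
    calc m ≤ x i0.1 := Finset.inf'_le x (Finset.mem_univ _)
      _ ≤ M := Finset.le_sup' x (Finset.mem_univ _)
  have key : P.mulVec x i - P.mulVec x k = ∑ j, (P i j - P k j) * (x j - m) := by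
    have h1 : ∑ j, (P i j - P k j) * (x j - m) =
        ((∑ j, P i j * x j) - (∑ j, P k j * x j)) -
        ((∑ j, P i j) * m - (∑ j, P k j) * m) := by
      simp only [sub_mul, mul_sub, Finset.sum_sub_distrib, Finset.sum_mul]
    rw [h1, hP.2 i, hP.2 k]
    have h2 : P.mulVec x i = ∑ j, P i j * x j := rfl
    have h3 : P.mulVec x k = ∑ j, P k j * x j := rfl
    rw [h2, h3]
    ring
  have hterm : ∀ j, (P i j - P k j) * (x j - m) ≤
      (P i j - min (P i j) (P k j)) * (M - m) := by
    intro j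
    have hxm : 0 ≤ x j - m := sub_nonneg.mpr (Finset.inf'_le x (Finset.mem_univ j))
    have hxM : x j - m ≤ M - m := by
      have := Finset.le_sup' x (Finset.mem_univ j)
      rw [hM]; linarith
    rcases le_total (P k j) (P i j) with hle | hle
    · rw [min_eq_right hle]
      exact mul_le_mul_of_nonneg_left hxM (by linarith)
    · rw [min_eq_left hle]
      have hnp : (P i j - P k j) * (x j - m) ≤ 0 :=
        mul_nonpos_of_nonpos_of_nonneg (by linarith) hxm
      simp only [sub_self, zero_mul]
      exact hnp
  have hsummin : α ≤ ∑ j, min (P i j) (P k j) := by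
    calc α ≤ min (P i j0) (P k j0) := le_min (hcol i) (hcol k)
      _ ≤ ∑ j, min (P i j) (P k j) := Finset.single_le_sum
          (fun j _ => le_min (hP.1 i j) (hP.1 k j)) (Finset.mem_univ j0)
  have hbound : ∑ j, (P i j - min (P i j) (P k j)) * (M - m) ≤ (1 - α) * (M - m) := by
    rw [← Finset.sum_mul]
    apply mul_le_mul_of_nonneg_right _ (by linarith)
    rw [Finset.sum_sub_distrib, hP.2 i]
    linarith
  calc Finset.univ.sup' hne (P.mulVec x) - Finset.univ.inf' hne (P.mulVec x)
      = P.mulVec x i - P.mulVec x k := by rw [hi, hk]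
    _ = ∑ j, (P i j - P k j) * (x j - m) := key
    _ ≤ ∑ j, (P i j - min (P i j) (P k j)) * (M - m) :=
        Finset.sum_le_sum fun j _ => hterm j
    _ ≤ (1 - α) * (M - m) := hbound

end Aux5
lemma prodFrom_comp {n : ℕ} (A : ℕ → Matrix (Fin n) (Fin n) ℝ) {s a b : ℕ}
    (hsa : s ≤ a) (hab : a ≤ b) :
    prodFrom A s b = prodFrom A a b * prodFrom A s a := by
  induction b, hab using Nat.le_induction with
  | base => rw [prodFrom_of_le A a le_rfl, one_mul]
  | succ b hb ih =>
    rw [prodFrom_succ A s (by omega), prodFrom_succ A a hb, ih, Matrix.mul_assoc]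

theorem ergodic_row_stochastic' {n : ℕ} (hn : 2 ≤ n)
    (A : ℕ → Matrix (Fin n) (Fin n) ℝ)
    (hRS : ∀ t, RowStochastic (A t))
    (hOD : ∀ t, OutDegreeForm (A t).transpose)
    (hflow : DirectedInfiniteFlow A)
    (hsum : Filter.Tendsto
      (fun Q => ∑ q ∈ Finset.Icc 1 Q, 1 / (n : ℝ) ^ (ellSeq A q))
      Filter.atTop Filter.atTop) :
    ∀ s : ℕ, ∃ v : Fin n → ℝ, (∀ j, 0 ≤ v j) ∧ (∑ j, v j = 1) ∧
      ∀ i j, Filter.Tendsto (fun t => matProd A t s i j) Filter.atTop (nhds (v j)) := by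
  obtain ⟨hd, hlb⟩ := entry_struct hOD
  intro s
  have hn0 : 0 < n := by omega
  have hne : (Finset.univ : Finset (Fin n)).Nonempty := ⟨⟨0, hn0⟩, Finset.mem_univ _⟩
  set F := prodFrom A s with hF
  have hFrs : ∀ t, RowStochastic (F t) := fun t => rowStochastic_prodFrom hRS s t
  set mm : Fin n → ℕ → ℝ := fun j t => Finset.univ.inf' hne (fun i => F t i j) with hmm
  set MM : Fin n → ℕ → ℝ := fun j t => Finset.univ.sup' hne (fun i => F t i j) with hMM
  have hcolstep : ∀ t, s ≤ t → ∀ j,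
      (fun i => F (t + 1) i j) = (A t).mulVec (fun i => F t i j) := by
    intro t ht j
    funext i
    rw [hF, prodFrom_succ A s ht]
    rfl
  have hmmono : ∀ j, Monotone (mm j) := by
    intro j
    apply monotone_nat_of_le_succ
    intro t
    by_cases hst : s ≤ t
    · apply Finset.le_inf'
      intro i _
      rw [show F (t + 1) i j = (A t).mulVec (fun i => F t i j) i from
        congrFun (hcolstep t hst j) i]
      exact mulVec_ge_inf' (hRS t) _ hne i
    · rw [hmm]
      simp only
      rw [hF, prodFrom_of_le A s (by omega), prodFrom_of_le A s (by omega)]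
  have hMamono : ∀ j, Antitone (MM j) := by
    intro j
    apply antitone_nat_of_succ_le
    intro t
    by_cases hst : s ≤ t
    · apply Finset.sup'_le
      intro i _
      rw [show F (t + 1) i j = (A t).mulVec (fun i => F t i j) i from
        congrFun (hcolstep t hst j) i]
      exact mulVec_le_sup' (hRS t) _ hne i
    · rw [hMM]
      simp only
      rw [hF, prodFrom_of_le A s (by omega), prodFrom_of_le A s (by omega)]
  have hmm0 : ∀ j t, 0 ≤ mm j t :=
    fun j t => Finset.le_inf' hne _ fun i _ => prodFrom_nonneg hRS s t i j
  have hMM1 : ∀ j t, MM j t ≤ 1 :=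
    fun j t => Finset.sup'_le hne _ fun i _ => entry_le_one (hFrs t) i j
  have hmM : ∀ j t, mm j t ≤ MM j t := by
    intro j t
    calc mm j t ≤ F t ⟨0, hn0⟩ j := Finset.inf'_le (fun i => F t i j) (Finset.mem_univ _)
      _ ≤ MM j t := Finset.le_sup' (fun i => F t i j) (Finset.mem_univ _)
  -- the contraction coefficient
  set β : ℕ → ℝ := fun q => 1 / (n : ℝ) ^ (ellSeq A q) with hβ
  have hβ0 : ∀ q, 0 ≤ β q := by intro q; rw [hβ]; positivity
  have hβ1 : ∀ q, β q ≤ 1 := by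
    intro q
    rw [hβ]
    simp only
    rw [div_le_one (by positivity)]
    calc (1:ℝ) = 1 ^ (ellSeq A q) := (one_pow _).symm
      _ ≤ (n:ℝ) ^ (ellSeq A q) := pow_le_pow_left₀ (by norm_num) (by exact_mod_cast hn0) _
  -- window contraction
  have hwindow : ∀ q : ℕ, 1 ≤ q → s ≤ kSeq A ((q - 1) * n) → ∀ j,
      MM j (kSeq A (q * n)) - mm j (kSeq A (q * n)) ≤
        (1 - β q) * (MM j (kSeq A ((q - 1) * n)) - mm j (kSeq A ((q - 1) * n))) := by
    intro q hq hs j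
    set a := kSeq A ((q - 1) * n) with hadef
    set b := kSeq A (q * n) with hbdef
    have habk : (q - 1) * n ≤ q * n := Nat.mul_le_mul_right n (by omega)
    have hab : a ≤ b := (kSeq_strictMono hRS hflow).monotone habk
    have hcompeq : F b = prodFrom A a b * F a := by
      rw [hF]
      exact prodFrom_comp A hs hab
    have hBlb : ∀ i k, β q ≤ prodFrom A a b i k := by
      intro i k
      have h1 := window_lb hRS hd hlb hflow ((q - 1) * n) i k
      have h2 : (q - 1) * n + n = q * n := by
        have : q - 1 + 1 = q := by omega
        calc (q - 1) * n + n = (q - 1 + 1) * n := by ring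
          _ = q * n := by rw [this]
      rw [h2] at h1
      have h3 : β q = (1 / (n:ℝ)) ^ (ellSeq A q) := by
        rw [hβ, one_div_pow]
      rw [h3]
      have h4 : ellSeq A q = b - a := rfl
      rw [h4]
      exact h1
    have hcoleq : (fun i => F b i j) = (prodFrom A a b).mulVec (fun i => F a i j) := by
      funext i
      rw [hcompeq]
      rfl
    have := osc_contraction (rowStochastic_prodFrom hRS a b) (hβ0 q)
      (j0 := ⟨0, hn0⟩) (fun i => hBlb i ⟨0, hn0⟩) (fun i => F a i j) hne
    rw [← hcoleq] at this
    exact this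
  -- iterate the contraction
  have hsleq : ∀ q : ℕ, s + 1 ≤ q → s ≤ kSeq A ((q - 1) * n) := by
    intro q hq
    calc s ≤ (q - 1) * n := by
          calc s ≤ s * n := Nat.le_mul_of_pos_right s hn0
            _ ≤ (q - 1) * n := Nat.mul_le_mul_right n (by omega)
      _ ≤ kSeq A ((q - 1) * n) := kSeq_ge hRS hflow _
  have hchain : ∀ j, ∀ Q : ℕ, s ≤ Q →
      MM j (kSeq A (Q * n)) - mm j (kSeq A (Q * n)) ≤
        ∏ q ∈ Finset.Icc (s + 1) Q, (1 - β q) := by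
    intro j Q hQ
    induction Q, hQ using Nat.le_induction with
    | base =>
      rw [Finset.Icc_eq_empty (by omega), Finset.prod_empty]
      have := hmm0 j (kSeq A (s * n))
      have := hMM1 j (kSeq A (s * n))
      have := hmM j (kSeq A (s * n))
      linarith
    | succ Q hQ ih =>
      have hstep := hwindow (Q + 1) (by omega) (by
        have : Q + 1 - 1 = Q := by omega
        rw [this]
        exact hsleq (Q + 1) (by omega) |>.trans_eq (by rw [this])) j
      have hq1 : Q + 1 - 1 = Q := by omega
      rw [hq1] at hstep
      have hfac0 : 0 ≤ 1 - β (Q + 1) := by have := hβ1 (Q + 1); linarith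
      calc MM j (kSeq A ((Q + 1) * n)) - mm j (kSeq A ((Q + 1) * n))
          ≤ (1 - β (Q + 1)) * (MM j (kSeq A (Q * n)) - mm j (kSeq A (Q * n))) := hstep
        _ ≤ (1 - β (Q + 1)) * ∏ q ∈ Finset.Icc (s + 1) Q, (1 - β q) :=
            mul_le_mul_of_nonneg_left ih hfac0
        _ = ∏ q ∈ Finset.Icc (s + 1) (Q + 1), (1 - β q) := by
            rw [Finset.prod_Icc_succ_top (by omega), mul_comm]
  -- the product tends to zero
  have htail : Filter.Tendsto (fun Q => ∑ q ∈ Finset.Icc (s + 1) Q, β q)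
      Filter.atTop Filter.atTop := by
    have hsplit : ∀ Q, s ≤ Q →
        ∑ q ∈ Finset.Icc (s + 1) Q, β q =
        (∑ q ∈ Finset.Icc 1 Q, β q) - ∑ q ∈ Finset.Icc 1 s, β q := by
      intro Q hQ
      have h1 : Finset.Icc 1 Q = Finset.Ioc 0 Q := by rw [← Finset.Icc_add_one_left_eq_Ioc]; rfl
      have h2 : Finset.Icc 1 s = Finset.Ioc 0 s := by rw [← Finset.Icc_add_one_left_eq_Ioc]; rfl
      have h3 : Finset.Icc (s + 1) Q = Finset.Ioc s Q := by rw [← Finset.Icc_add_one_left_eq_Ioc]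
      rw [h1, h2, h3]
      have := Finset.sum_Ioc_consecutive (f := β) (Nat.zero_le s) hQ
      linarith
    have hmain : Filter.Tendsto
        (fun Q => (∑ q ∈ Finset.Icc 1 Q, β q) - ∑ q ∈ Finset.Icc 1 s, β q)
        Filter.atTop Filter.atTop :=
      Filter.tendsto_atTop_add_const_right _ _ hsum
    apply Filter.Tendsto.congr' _ hmain
    filter_upwards [Filter.eventually_ge_atTop s] with Q hQ
    exact (hsplit Q hQ).symm
  have hprod0 : Filter.Tendsto (fun Q => ∏ q ∈ Finset.Icc (s + 1) Q, (1 - β q))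
      Filter.atTop (nhds 0) := by
    have hub : ∀ Q, ∏ q ∈ Finset.Icc (s + 1) Q, (1 - β q) ≤
        Real.exp (-∑ q ∈ Finset.Icc (s + 1) Q, β q) := by
      intro Q
      calc ∏ q ∈ Finset.Icc (s + 1) Q, (1 - β q)
          ≤ ∏ q ∈ Finset.Icc (s + 1) Q, Real.exp (-β q) := by
            apply Finset.prod_le_prod
            · intro q _; have := hβ1 q; linarith
            · intro q _
              have := Real.add_one_le_exp (-β q)
              linarith
        _ = Real.exp (∑ q ∈ Finset.Icc (s + 1) Q, -β q) := (Real.exp_sum _ _).symm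
        _ = Real.exp (-∑ q ∈ Finset.Icc (s + 1) Q, β q) := by
            rw [Finset.sum_neg_distrib]
    have hlb0 : ∀ Q, (0:ℝ) ≤ ∏ q ∈ Finset.Icc (s + 1) Q, (1 - β q) := by
      intro Q
      apply Finset.prod_nonneg
      intro q _; have := hβ1 q; linarith
    have hexp : Filter.Tendsto (fun Q => Real.exp (-∑ q ∈ Finset.Icc (s + 1) Q, β q))
        Filter.atTop (nhds 0) :=
      Real.tendsto_exp_atBot.comp (Filter.tendsto_neg_atTop_atBot.comp htail)
    exact tendsto_of_tendsto_of_tendsto_of_le_of_le tendsto_const_nhds hexp hlb0 hub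
  have hsubseq : Filter.Tendsto (fun Q => kSeq A (Q * n)) Filter.atTop Filter.atTop := by
    apply Filter.tendsto_atTop_mono (f := fun Q => Q)
    · intro Q
      calc Q ≤ Q * n := Nat.le_mul_of_pos_right Q hn0
        _ ≤ kSeq A (Q * n) := kSeq_ge hRS hflow _
    · exact Filter.tendsto_id
  have hDlim : ∀ j, Filter.Tendsto (fun Q => MM j (kSeq A (Q * n)) - mm j (kSeq A (Q * n)))
      Filter.atTop (nhds 0) := by
    intro j
    apply tendsto_of_tendsto_of_tendsto_of_le_of_le' tendsto_const_nhds hprod0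
    · filter_upwards with Q
      have := hmM j (kSeq A (Q * n))
      linarith
    · filter_upwards [Filter.eventually_ge_atTop s] with Q hQ
      exact hchain j Q hQ
  -- limits of mm and MM
  have hbddA : ∀ j, BddAbove (Set.range (mm j)) := by
    intro j
    refine ⟨1, ?_⟩
    rintro x ⟨t, rfl⟩
    exact (hmM j t).trans (hMM1 j t)
  have hbddB : ∀ j, BddBelow (Set.range (MM j)) := by
    intro j
    refine ⟨0, ?_⟩
    rintro x ⟨t, rfl⟩
    exact (hmm0 j t).trans (hmM j t)
  set v : Fin n → ℝ := fun j => ⨆ t, mm j t with hv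
  set w : Fin n → ℝ := fun j => ⨅ t, MM j t with hw
  have hmtend : ∀ j, Filter.Tendsto (mm j) Filter.atTop (nhds (v j)) :=
    fun j => tendsto_atTop_ciSup (hmmono j) (hbddA j)
  have hMtend : ∀ j, Filter.Tendsto (MM j) Filter.atTop (nhds (w j)) :=
    fun j => tendsto_atTop_ciInf (hMamono j) (hbddB j)
  have hwv : ∀ j, w j = v j := by
    intro j
    have h1 : Filter.Tendsto (fun Q => MM j (kSeq A (Q * n)) - mm j (kSeq A (Q * n)))
        Filter.atTop (nhds (w j - v j)) :=
      ((hMtend j).comp hsubseq).sub ((hmtend j).comp hsubseq)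
    have h2 := tendsto_nhds_unique h1 (hDlim j)
    linarith [h2]
  have hentry : ∀ i j, Filter.Tendsto (fun t => F t i j) Filter.atTop (nhds (v j)) := by
    intro i j
    apply tendsto_of_tendsto_of_tendsto_of_le_of_le (hmtend j) (hwv j ▸ hMtend j)
    · intro t
      exact Finset.inf'_le (fun i => F t i j) (Finset.mem_univ i)
    · intro t
      exact Finset.le_sup' (fun i => F t i j) (Finset.mem_univ i)
  refine ⟨v, ?_, ?_, ?_⟩
  · intro j
    have : mm j 0 ≤ v j := le_ciSup (hbddA j) 0
    exact (hmm0 j 0).trans this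
  · have hsum1 : Filter.Tendsto (fun t => ∑ j, F t ⟨0, hn0⟩ j) Filter.atTop
        (nhds (∑ j, v j)) :=
      tendsto_finset_sum _ fun j _ => hentry ⟨0, hn0⟩ j
    have hconst : ∀ t, ∑ j, F t ⟨0, hn0⟩ j = 1 := fun t => (hFrs t).2 _
    have : Filter.Tendsto (fun _ : ℕ => (1:ℝ)) Filter.atTop (nhds (∑ j, v j)) := by
      apply hsum1.congr
      intro t
      rw [hconst t]
    exact tendsto_nhds_unique this tendsto_const_nhds
  · intro i j
    have h1 : Filter.Tendsto (fun t => F (t + 1) i j) Filter.atTop (nhds (v j)) :=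
      (hentry i j).comp (Filter.tendsto_add_atTop_nat 1)
    apply h1.congr'
    filter_upwards [Filter.eventually_ge_atTop s] with t ht
    rw [hF, ← matProd_eq_prodFrom A s (by omega)]


/-- Under the hypotheses of Statement 1, if `∑_q 1/n^{ℓ_q} = ∞`,
then the sequence is ergodic: `A(t:s) → 1ₙ v(s)'` for a stochastic vector `v(s)`. -/
theorem ergodic_row_stochastic {n : ℕ} (hn : 2 ≤ n)
    (A : ℕ → Matrix (Fin n) (Fin n) ℝ)
    (hRS : ∀ t, RowStochastic (A t))
    (hOD : ∀ t, OutDegreeForm (A t).transpose)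
    (hAper : StronglyAperiodic A)
    (hflow : DirectedInfiniteFlow A)
    (hsum : Filter.Tendsto
      (fun Q => ∑ q ∈ Finset.Icc 1 Q, 1 / (n : ℝ) ^ (ellSeq A q))
      Filter.atTop Filter.atTop) :
    ∀ s : ℕ, ∃ v : Fin n → ℝ, (∀ j, 0 ≤ v j) ∧ (∑ j, v j = 1) ∧
      ∀ i j, Filter.Tendsto (fun t => matProd A t s i j) Filter.atTop (nhds (v j)) := by
  exact ergodic_row_stochastic' hn A hRS hOD hflow hsum
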